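/- Unrolling a discounted error recursion over an occupancy measure: if a function Δ on histories satisfies Δ(h_t) ≤ E_{a∼π(h_t)}[ε(s_t,a)] + γ·E_{a∼π(h_t), (r,s')∼m̂(s_t,a)}[Δ(h_{t+1})] for all t, with Δ bounded and ε ≥ 0, then E_{s₀∼ρ}[Δ(s₀)] ≤ (1/(1−γ))·E_{(s,a)∼d^π_{m̂}}[ε(s,a)], where d^π_{m̂} is the normalized discounted occupancy measure. -/

import Mathlib

/-- A history: a list of past (state, action, reward) triples (most recent first)
together with the current state. -/
abbrev Hist (S A Rw : Type*) := List (S × A × Rw) × S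

/-- Probability of a history under initial distribution `ρ`, history-dependent
policy `π`, and model `m̂`. -/
noncomputable def histProb {S A Rw : Type*}
    (ρ : S → ℝ) (π : Hist S A Rw → A → ℝ) (m : S → A → Rw × S → ℝ) :
    List (S × A × Rw) → S → ℝ
  | [], s => ρ s
  | (s, a, r) :: rest, s' =>
      histProb ρ π m rest s * π (rest, s) a * m s a (r, s')

/-- Normalized discounted state-action occupancy
`d^π_m(s,a) = (1−γ)∑_t γ^t Pr(s_t=s, a_t=a)`. -/
noncomputable def occupancy {S A Rw : Type*} [DecidableEq S]
    (γ : ℝ) (ρ : S → ℝ) (π : Hist S A Rw → A → ℝ)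
    (m : S → A → Rw × S → ℝ) (s : S) (a : A) : ℝ :=
  (1 - γ) * ∑' h : Hist S A Rw,
    if h.2 = s then γ ^ h.1.length * histProb ρ π m h.1 h.2 * π h a else 0

section Aux

variable {S A Rw : Type*} [Fintype S] [Fintype A] [Fintype Rw]

/-- Decompose a history of length `n+1` into a history of length `n` plus one step. -/
def stepEquiv (S A Rw : Type*) (n : ℕ) :
    (List.Vector (S × A × Rw) n × S) × A × (Rw × S) ≃
      List.Vector (S × A × Rw) (n + 1) × S where
  toFun p := ((p.1.2, p.2.1, p.2.2.1) ::ᵥ p.1.1, p.2.2.2)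
  invFun p := ((p.1.tail, p.1.head.1), p.1.head.2.1, (p.1.head.2.2, p.2))
  left_inv := by
    rintro ⟨⟨l, s⟩, a, r, s'⟩
    simp
  right_inv := by
    rintro ⟨v, s'⟩
    show (v.head ::ᵥ v.tail, s') = (v, s')
    rw [v.cons_head_tail]

lemma sum_step {n : ℕ} (g : List.Vector (S × A × Rw) (n + 1) × S → ℝ) :
    ∑ p, g p =
      ∑ q : List.Vector (S × A × Rw) n × S, ∑ a : A, ∑ x : Rw × S,
        g ((q.2, a, x.1) ::ᵥ q.1, x.2) := by
  rw [← Equiv.sum_comp (stepEquiv S A Rw n) g]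
  rw [Fintype.sum_prod_type]
  refine Finset.sum_congr rfl fun q _ => ?_
  rw [Fintype.sum_prod_type]
  rfl

/-- Bijection between all histories and length-indexed histories. -/
def histEquiv (S A Rw : Type*) :
    (Σ n : ℕ, List.Vector (S × A × Rw) n × S) ≃ Hist S A Rw where
  toFun p := (p.2.1.toList, p.2.2)
  invFun h := ⟨h.1.length, (⟨h.1, rfl⟩, h.2)⟩
  left_inv := by
    rintro ⟨n, ⟨⟨l, hl⟩, s⟩⟩
    subst hl
    rfl
  right_inv h := rfl

variable (ρ : S → ℝ) (π : Hist S A Rw → A → ℝ) (m : S → A → Rw × S → ℝ)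

lemma histProb_nonneg (hρ0 : ∀ s, 0 ≤ ρ s) (hπ0 : ∀ h a, 0 ≤ π h a)
    (hm0 : ∀ s a x, 0 ≤ m s a x) :
    ∀ (l : List (S × A × Rw)) (s : S), 0 ≤ histProb ρ π m l s
  | [], s => hρ0 s
  | (s, a, r) :: rest, s' =>
    mul_nonneg (mul_nonneg (histProb_nonneg hρ0 hπ0 hm0 rest s) (hπ0 _ a))
      (hm0 s a (r, s'))

/-- Expected value of `Δ` over histories of length `n`. -/
noncomputable def histT (Δ : Hist S A Rw → ℝ) (n : ℕ) : ℝ :=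
  ∑ q : List.Vector (S × A × Rw) n × S,
    histProb ρ π m q.1.toList q.2 * Δ (q.1.toList, q.2)

lemma histT_succ (Δ : Hist S A Rw → ℝ) (n : ℕ) :
    histT ρ π m Δ (n + 1) =
      ∑ q : List.Vector (S × A × Rw) n × S,
        histProb ρ π m q.1.toList q.2 *
          ∑ a, π (q.1.toList, q.2) a * ∑ x : Rw × S,
            m q.2 a x * Δ ((q.2, a, x.1) :: q.1.toList, x.2) := by
  rw [histT, sum_step]
  refine Finset.sum_congr rfl fun q _ => ?_
  simp only [Finset.mul_sum]
  refine Finset.sum_congr rfl fun a _ => ?_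
  refine Finset.sum_congr rfl fun x _ => ?_
  have hc : (((q.2, a, x.1) ::ᵥ q.1 : List.Vector (S × A × Rw) (n + 1))).toList
      = (q.2, a, x.1) :: q.1.toList := List.Vector.toList_cons _ _
  rw [hc]
  simp only [histProb]
  ring

lemma sum_histProb (hρ1 : ∑ s, ρ s = 1) (hπ1 : ∀ h, ∑ a, π h a = 1)
    (hm1 : ∀ s a, ∑ x, m s a x = 1) (n : ℕ) :
    histT ρ π m (fun _ => (1 : ℝ)) n = 1 := by
  induction n with
  | zero =>
      haveI : Unique (List.Vector (S × A × Rw) 0) :=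
        ⟨⟨List.Vector.nil⟩, fun v => v.eq_nil⟩
      have h0 : ∀ v : List.Vector (S × A × Rw) 0, v.toList = [] :=
        fun v => List.length_eq_zero_iff.mp v.2
      rw [histT, Fintype.sum_prod_type]
      simp only [h0, histProb, mul_one]
      simp [hρ1]
  | succ n ih =>
      rw [histT_succ]
      simp only [hm1, mul_one, hπ1]
      simpa [histT] using ih

end Aux

theorem discounted_error_unrolling {S A Rw : Type*}
    [Fintype S] [Fintype A] [Fintype Rw] [DecidableEq S]
    (γ : ℝ) (hγ0 : 0 ≤ γ) (hγ1 : γ < 1)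
    (ρ : S → ℝ) (hρ0 : ∀ s, 0 ≤ ρ s) (hρ1 : ∑ s, ρ s = 1)
    (π : Hist S A Rw → A → ℝ)
    (hπ0 : ∀ h a, 0 ≤ π h a) (hπ1 : ∀ h, ∑ a, π h a = 1)
    (mhat : S → A → Rw × S → ℝ)
    (hmhat0 : ∀ s a x, 0 ≤ mhat s a x) (hmhat1 : ∀ s a, ∑ x, mhat s a x = 1)
    (Δ : Hist S A Rw → ℝ) (B : ℝ) (hΔB : ∀ h, |Δ h| ≤ B)
    (εf : S → A → ℝ) (hεf : ∀ s a, 0 ≤ εf s a)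
    (hrec : ∀ h : Hist S A Rw,
      Δ h ≤ (∑ a, π h a * εf h.2 a) +
        γ * ∑ a, π h a * ∑ x : Rw × S,
          mhat h.2 a x * Δ ((h.2, a, x.1) :: h.1, x.2)) :
    (∑ s, ρ s * Δ ([], s)) ≤
      (1 / (1 - γ)) * ∑ s, ∑ a, occupancy γ ρ π mhat s a * εf s a := by
  classical
  haveI : Unique (List.Vector (S × A × Rw) 0) :=
    ⟨⟨List.Vector.nil⟩, fun v => v.eq_nil⟩
  have h1γ : (0:ℝ) < 1 - γ := by linarith
  have hP0 : ∀ (l : List (S × A × Rw)) (s : S), 0 ≤ histProb ρ π mhat l s :=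
    histProb_nonneg ρ π mhat hρ0 hπ0 hmhat0
  -- abbreviations
  set w : Hist S A Rw → ℝ := fun h => ∑ a, π h a * εf h.2 a with hw
  set T : ℕ → ℝ := histT ρ π mhat Δ with hT
  set E : ℕ → ℝ := histT ρ π mhat w with hE
  set g : Hist S A Rw → ℝ :=
    fun h => γ ^ h.1.length * histProb ρ π mhat h.1 h.2 * w h with hg
  set C : ℝ := ∑ s, ∑ a, εf s a with hC
  have hOne : ∀ n, histT ρ π mhat (fun _ => (1:ℝ)) n = 1 :=
    sum_histProb ρ π mhat hρ1 hπ1 hmhat1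
  have hMono : ∀ (f f' : Hist S A Rw → ℝ), (∀ h, f h ≤ f' h) →
      ∀ n, histT ρ π mhat f n ≤ histT ρ π mhat f' n := by
    intro f f' hff n
    refine Finset.sum_le_sum fun q _ => ?_
    exact mul_le_mul_of_nonneg_left (hff _) (hP0 _ _)
  have hConst : ∀ (c : ℝ) (n : ℕ), histT ρ π mhat (fun _ => c) n = c := by
    intro c n
    have h1 := hOne n
    rw [histT] at h1 ⊢
    simp only [mul_one] at h1
    rw [← Finset.sum_mul, h1, one_mul]
  have hw0 : ∀ h, 0 ≤ w h := fun h =>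
    Finset.sum_nonneg fun a _ => mul_nonneg (hπ0 h a) (hεf _ a)
  have hwC : ∀ h, w h ≤ C := by
    intro h
    have h1 : w h ≤ ∑ a, εf h.2 a := by
      refine Finset.sum_le_sum fun a _ => ?_
      have : π h a ≤ 1 := by
        rw [← hπ1 h]
        exact Finset.single_le_sum (fun a _ => hπ0 h a) (Finset.mem_univ a)
      nlinarith [hεf h.2 a, hπ0 h a]
    refine h1.trans ?_
    exact Finset.single_le_sum
      (fun s _ => Finset.sum_nonneg fun a _ => hεf s a) (Finset.mem_univ h.2)
  have hE0 : ∀ n, 0 ≤ E n := fun n =>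
    Finset.sum_nonneg fun q _ => mul_nonneg (hP0 _ _) (hw0 _)
  have hE_le : ∀ n, E n ≤ C := fun n => (hMono _ _ hwC n).trans_eq (hConst C n)
  have hT_abs : ∀ n, |T n| ≤ B := by
    intro n
    calc |T n| ≤ ∑ q : List.Vector (S × A × Rw) n × S,
        |histProb ρ π mhat q.1.toList q.2 * Δ (q.1.toList, q.2)| :=
          Finset.abs_sum_le_sum_abs _ _
      _ = histT ρ π mhat (fun h => |Δ h|) n := by
          refine Finset.sum_congr rfl fun q _ => ?_
          rw [abs_mul, abs_of_nonneg (hP0 _ _)]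
      _ ≤ histT ρ π mhat (fun _ => B) n := hMono _ _ hΔB n
      _ = B := hConst B n
  have hB0 : 0 ≤ B := le_trans (abs_nonneg _) (hT_abs 0)
  have hTrec : ∀ n, T n ≤ E n + γ * T (n + 1) := by
    intro n
    have h1 : T n ≤ histT ρ π mhat (fun h => w h +
        γ * ∑ a, π h a * ∑ x : Rw × S,
          mhat h.2 a x * Δ ((h.2, a, x.1) :: h.1, x.2)) n := hMono _ _ hrec n
    refine h1.trans_eq ?_
    rw [hE, hT, histT, histT_succ]
    simp only [mul_add, Finset.sum_add_distrib, Finset.mul_sum]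
    congr 1
    refine Finset.sum_congr rfl fun q _ => Finset.sum_congr rfl fun a _ =>
      Finset.sum_congr rfl fun x _ => by ring
  have hUnroll : ∀ n,
      T 0 ≤ (∑ k ∈ Finset.range n, γ ^ k * E k) + γ ^ n * T n := by
    intro n
    induction n with
    | zero => simp
    | succ n ih =>
        refine ih.trans ?_
        have h2 : γ ^ n * T n ≤ γ ^ n * (E n + γ * T (n + 1)) :=
          mul_le_mul_of_nonneg_left (hTrec n) (pow_nonneg hγ0 n)
        rw [Finset.sum_range_succ, pow_succ]
        nlinarith [h2]
  have hsumE : Summable (fun k => γ ^ k * E k) := by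
    refine Summable.of_nonneg_of_le
      (fun k => mul_nonneg (pow_nonneg hγ0 k) (hE0 k))
      (fun k => mul_le_mul_of_nonneg_left (hE_le k) (pow_nonneg hγ0 k)) ?_
    exact (summable_geometric_of_lt_one hγ0 hγ1).mul_right C
  have hlim : T 0 ≤ ∑' k, γ ^ k * E k := by
    have h1 : ∀ n : ℕ, T 0 ≤ (∑' k, γ ^ k * E k) + γ ^ n * B := by
      intro n
      refine (hUnroll n).trans (add_le_add ?_ ?_)
      · exact Summable.sum_le_tsum (Finset.range n)
          (fun k _ => mul_nonneg (pow_nonneg hγ0 k) (hE0 k)) hsumE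
      · exact mul_le_mul_of_nonneg_left
          ((le_abs_self _).trans (hT_abs n)) (pow_nonneg hγ0 n)
    have h2 : Filter.Tendsto (fun n : ℕ => (∑' k, γ ^ k * E k) + γ ^ n * B)
        Filter.atTop (nhds ((∑' k, γ ^ k * E k) + 0 * B)) :=
      Filter.Tendsto.add tendsto_const_nhds
        (((tendsto_pow_atTop_nhds_zero_of_lt_one hγ0 hγ1)).mul_const B)
    have h3 := ge_of_tendsto h2 (Filter.Eventually.of_forall h1)
    simpa using h3
  -- identify the tsum with the occupancy expression
  have hfib : ∀ n, (∑ q : List.Vector (S × A × Rw) n × S,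
      g (histEquiv S A Rw ⟨n, q⟩)) = γ ^ n * E n := by
    intro n
    rw [hE, histT, Finset.mul_sum]
    refine Finset.sum_congr rfl fun q _ => ?_
    show γ ^ (q.1.toList.length) * histProb ρ π mhat q.1.toList q.2 *
        w (q.1.toList, q.2) = _
    rw [q.1.toList_length]
    ring
  have hg0 : ∀ h, 0 ≤ g h := fun h =>
    mul_nonneg (mul_nonneg (pow_nonneg hγ0 _) (hP0 _ _)) (hw0 h)
  have hgs : Summable (fun p : (Σ n : ℕ, List.Vector (S × A × Rw) n × S) =>
      g (histEquiv S A Rw p)) := by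
    refine (summable_sigma_of_nonneg fun p => hg0 _).mpr ⟨fun n => .of_finite, ?_⟩
    refine hsumE.congr fun n => ?_
    rw [tsum_fintype]
    exact (hfib n).symm
  have hgsum : Summable g := (histEquiv S A Rw).summable_iff.mp hgs
  have htg : ∑' h, g h = ∑' k, γ ^ k * E k := by
    rw [← Equiv.tsum_eq (histEquiv S A Rw) g, Summable.tsum_sigma hgs]
    exact tsum_congr fun n => by rw [tsum_fintype, hfib n]
  -- the occupancy side
  set G : S → A → Hist S A Rw → ℝ := fun s a h =>
    (if h.2 = s then γ ^ h.1.length * histProb ρ π mhat h.1 h.2 * π h a else 0)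
      * εf s a with hG
  have hG_le : ∀ s a h, G s a h ≤ g h := by
    intro s a h
    show (if h.2 = s then γ ^ h.1.length * histProb ρ π mhat h.1 h.2 * π h a
        else 0) * εf s a ≤ γ ^ h.1.length * histProb ρ π mhat h.1 h.2 * w h
    split_ifs with hc
    · subst hc
      have hle : π h a * εf h.2 a ≤ w h := Finset.single_le_sum
        (fun a' _ => mul_nonneg (hπ0 h a') (hεf _ a')) (Finset.mem_univ a)
      have h0 : 0 ≤ γ ^ h.1.length * histProb ρ π mhat h.1 h.2 :=
        mul_nonneg (pow_nonneg hγ0 _) (hP0 _ _)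
      calc γ ^ h.1.length * histProb ρ π mhat h.1 h.2 * π h a * εf h.2 a
          = γ ^ h.1.length * histProb ρ π mhat h.1 h.2 * (π h a * εf h.2 a) := by
            ring
        _ ≤ γ ^ h.1.length * histProb ρ π mhat h.1 h.2 * w h :=
            mul_le_mul_of_nonneg_left hle h0
    · simpa using hg0 h
  have hG0 : ∀ s a h, 0 ≤ G s a h := by
    intro s a h
    rw [hG]
    dsimp only
    refine mul_nonneg ?_ (hεf s a)
    split_ifs with hc
    · exact mul_nonneg (mul_nonneg (pow_nonneg hγ0 _) (hP0 _ _)) (hπ0 h a)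
    · exact le_refl 0
  have hGsum : ∀ s a, Summable (G s a) := fun s a =>
    Summable.of_nonneg_of_le (hG0 s a) (hG_le s a) hgsum
  have hGg : ∀ h, (∑ s, ∑ a, G s a h) = g h := by
    intro h
    rw [hg]
    dsimp only
    have : ∀ s, ∑ a, G s a h = if h.2 = s then
        γ ^ h.1.length * histProb ρ π mhat h.1 h.2 * ∑ a, π h a * εf s a
      else 0 := by
      intro s
      rw [hG]
      dsimp only
      split_ifs with hc
      · rw [Finset.mul_sum]
        refine Finset.sum_congr rfl fun a _ => ?_
        rw [mul_assoc]
      · simp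
    simp only [this]
    rw [Finset.sum_ite_eq Finset.univ h.2]
    simp [hw]
  have hRHS : (1 / (1 - γ)) * ∑ s, ∑ a, occupancy γ ρ π mhat s a * εf s a
      = ∑' h, g h := by
    have hocc : ∀ s a, occupancy γ ρ π mhat s a * εf s a
        = (1 - γ) * ∑' h, G s a h := by
      intro s a
      rw [occupancy, mul_assoc, ← tsum_mul_right]
    simp only [hocc, ← Finset.mul_sum]
    rw [← mul_assoc, one_div, inv_mul_cancel₀ (ne_of_gt h1γ), one_mul]
    calc ∑ s, ∑ a, ∑' h, G s a h
        = ∑ s, ∑' h, ∑ a, G s a h :=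
          Finset.sum_congr rfl fun s _ => (Summable.tsum_finsetSum fun a _ => hGsum s a).symm
      _ = ∑' h, ∑ s, ∑ a, G s a h :=
          (Summable.tsum_finsetSum fun s _ => summable_sum fun a _ => hGsum s a).symm
      _ = ∑' h, g h := tsum_congr hGg
  have hT0 : T 0 = ∑ s, ρ s * Δ ([], s) := by
    have h0 : ∀ v : List.Vector (S × A × Rw) 0, v.toList = [] :=
      fun v => List.length_eq_zero_iff.mp v.2
    rw [hT, histT, Fintype.sum_prod_type]
    simp [h0, histProb]
  rw [hRHS, htg, ← hT0]
  exact hlim
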